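/- For every nonnegative integer n, the Laguerre polynomial L_n(x) expands in Hermite polynomials as L_n(x) = Σ_{k=0}^{n} c_{n,k} H_k(x), where c_{n,k} = ((-n)_k / (2^k (k!)^2)) · Σ_{j=0}^{⌊(n-k)/2⌋} [((k-n)/2)_j ((k+1-n)/2)_j / (((k+1)/2)_j ((k+2)/2)_j)] · (1/4)^j / j!. -/

import Mathlib

open Finset

/-- Pochhammer (rising factorial) symbol on the reals. -/
noncomputable def poch (a : ℝ) (n : ℕ) : ℝ := ∏ i ∈ Finset.range n, (a + i)

/-- Physicists' Hermite polynomial. -/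
noncomputable def hermiteP (N : ℕ) (x : ℝ) : ℝ :=
  (N.factorial : ℝ) * ∑ k ∈ Finset.range (N / 2 + 1),
    (-1 : ℝ) ^ k * (2 * x) ^ (N - 2 * k) / ((k.factorial : ℝ) * ((N - 2 * k).factorial : ℝ))

/-- Laguerre polynomial (α = 0). -/
noncomputable def laguerreP (n : ℕ) (x : ℝ) : ℝ :=
  ∑ k ∈ Finset.range (n + 1), poch (-(n : ℝ)) k * x ^ k / ((k.factorial : ℝ)) ^ 2

lemma poch_zero (a : ℝ) : poch a 0 = 1 := by simp [poch]

lemma poch_succ (a : ℝ) (n : ℕ) : poch a (n+1) = poch a n * (a + n) := by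
  simp [poch, Finset.prod_range_succ]

lemma poch_add (a : ℝ) (m n : ℕ) : poch a (m+n) = poch a m * poch (a+m) n := by
  induction n with
  | zero => simp [poch_zero]
  | succ n ih =>
    rw [← Nat.add_assoc, poch_succ, ih, poch_succ]
    push_cast
    ring

lemma poch_two_mul (b : ℝ) (i : ℕ) :
    poch b (2*i) = 4^i * poch (b/2) i * poch ((b+1)/2) i := by
  induction i with
  | zero => simp [poch_zero]
  | succ i ih =>
    have h : 2*(i+1) = 2*i + 1 + 1 := by ring
    rw [h, poch_succ, poch_succ, ih, poch_succ, poch_succ]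
    push_cast
    ring

lemma poch_pos (a : ℝ) (ha : 0 < a) (n : ℕ) : 0 < poch a n := by
  apply Finset.prod_pos
  intro i _
  positivity

lemma factorial_poch (k m : ℕ) :
    (((k+m).factorial : ℝ)) = (k.factorial : ℝ) * poch ((k:ℝ)+1) m := by
  induction m with
  | zero => simp [poch_zero]
  | succ m ih =>
    have h : k + (m+1) = (k+m) + 1 := by ring
    rw [h, Nat.factorial_succ, poch_succ]
    push_cast [ih]
    ring

lemma reindexA (N : ℕ) (f : ℕ → ℕ → ℝ) :
    ∑ m ∈ range (N+1), ∑ i ∈ range (m/2+1), f m i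
      = ∑ k ∈ range (N+1), ∑ i ∈ range ((N-k)/2+1), f (k+2*i) i := by
  rw [Finset.sum_sigma', Finset.sum_sigma']
  refine Finset.sum_nbij' (fun p => ⟨p.1 - 2*p.2, p.2⟩) (fun p => ⟨p.1 + 2*p.2, p.2⟩)
    ?_ ?_ ?_ ?_ ?_
  · rintro ⟨m, i⟩ h
    simp only [Finset.mem_sigma, Finset.mem_range] at h ⊢
    omega
  · rintro ⟨k, i⟩ h
    simp only [Finset.mem_sigma, Finset.mem_range] at h ⊢
    omega
  · rintro ⟨m, i⟩ h
    simp only [Finset.mem_sigma, Finset.mem_range] at h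
    simp only [Sigma.mk.inj_iff, heq_eq_eq]
    exact ⟨by omega, trivial⟩
  · rintro ⟨k, i⟩ h
    simp only [Finset.mem_sigma, Finset.mem_range] at h
    simp only [Sigma.mk.inj_iff, heq_eq_eq]
    exact ⟨by omega, trivial⟩
  · rintro ⟨m, i⟩ h
    simp only [Finset.mem_sigma, Finset.mem_range] at h
    have : m - 2*i + 2*i = m := by omega
    simp [this]

lemma reindexB (M : ℕ) (g : ℕ → ℕ → ℝ) :
    ∑ i ∈ range (M/2+1), ∑ j ∈ range ((M-2*i)/2+1), g i j
      = ∑ s ∈ range (M/2+1), ∑ j ∈ range (s+1), g (s-j) j := by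
  rw [Finset.sum_sigma', Finset.sum_sigma']
  refine Finset.sum_nbij' (fun p => ⟨p.1 + p.2, p.2⟩) (fun p => ⟨p.1 - p.2, p.2⟩)
    ?_ ?_ ?_ ?_ ?_
  · rintro ⟨i, j⟩ h
    simp only [Finset.mem_sigma, Finset.mem_range] at h ⊢
    omega
  · rintro ⟨s, j⟩ h
    simp only [Finset.mem_sigma, Finset.mem_range] at h ⊢
    omega
  · rintro ⟨i, j⟩ h
    simp only [Finset.mem_sigma, Finset.mem_range] at h
    simp only [Sigma.mk.inj_iff, heq_eq_eq]
    exact ⟨by omega, trivial⟩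
  · rintro ⟨s, j⟩ h
    simp only [Finset.mem_sigma, Finset.mem_range] at h
    simp only [Sigma.mk.inj_iff, heq_eq_eq]
    exact ⟨by omega, trivial⟩
  · rintro ⟨i, j⟩ h
    simp only [Finset.mem_sigma, Finset.mem_range] at h
    have : i + j - j = i := by omega
    simp [this]

lemma alt_sum (s : ℕ) :
    ∑ j ∈ range (s+1), (-1:ℝ)^j / ((j.factorial : ℝ) * ((s-j).factorial : ℝ))
      = if s = 0 then 1 else 0 := by
  have h1 : ∀ j ∈ range (s+1),
      (-1:ℝ)^j / ((j.factorial : ℝ) * ((s-j).factorial : ℝ))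
        = ((-1:ℝ)^j * (s.choose j)) / (s.factorial : ℝ) := by
    intro j hj
    simp only [Finset.mem_range, Nat.lt_succ_iff] at hj
    have hc : (s.choose j) * (j.factorial * (s-j).factorial) = s.factorial := by
      rw [← mul_assoc]; exact Nat.choose_mul_factorial_mul_factorial hj
    have hc' : ((s.choose j : ℝ)) * ((j.factorial : ℝ) * ((s-j).factorial : ℝ))
        = (s.factorial : ℝ) := by
      exact_mod_cast congrArg (Nat.cast : ℕ → ℝ) hc
    have hs : ((s.factorial : ℝ)) ≠ 0 := by positivity
    rw [div_eq_div_iff (by positivity) hs, ← hc']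
    ring
  rw [Finset.sum_congr rfl h1, ← Finset.sum_div]
  have := Int.alternating_sum_range_choose (n := s)
  have h2 : ∑ j ∈ range (s+1), (-1:ℝ)^j * (s.choose j) = if s = 0 then 1 else 0 := by
    exact_mod_cast congrArg (Int.cast : ℤ → ℝ) this
  rw [h2]
  split <;> simp_all [Nat.factorial]

lemma hermite_inv (m : ℕ) (x : ℝ) :
    x ^ m = ∑ i ∈ range (m/2+1),
      (m.factorial : ℝ)/((2:ℝ)^m * (i.factorial : ℝ) * (((m-2*i).factorial : ℝ))) *
        hermiteP (m-2*i) x := by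
  have step1 : ∀ i ∈ range (m/2+1),
      (m.factorial : ℝ)/((2:ℝ)^m * (i.factorial : ℝ) * (((m-2*i).factorial : ℝ))) *
          hermiteP (m-2*i) x
        = ∑ j ∈ range ((m-2*i)/2+1),
            (m.factorial : ℝ)/((2:ℝ)^m * (i.factorial : ℝ) * (j.factorial : ℝ)
              * (((m-2*(i+j)).factorial : ℝ))) * ((-1:ℝ)^j * (2*x)^(m-2*(i+j))) := by
    intro i hi
    rw [hermiteP, Finset.mul_sum, Finset.mul_sum]
    apply Finset.sum_congr rfl
    intro j hj
    have h1 : (m - 2*i) - 2*j = m - 2*(i+j) := by omega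
    rw [h1]
    have h2 : ((m-2*i).factorial : ℝ) ≠ 0 := by positivity
    have h3 : ((m-2*(i+j)).factorial : ℝ) ≠ 0 := by positivity
    have h4 : ((i.factorial : ℝ)) ≠ 0 := by positivity
    have h5 : ((j.factorial : ℝ)) ≠ 0 := by positivity
    have h6 : ((2:ℝ)^m) ≠ 0 := by positivity
    field_simp
  rw [Finset.sum_congr rfl step1, reindexB]
  have step2 : ∀ s ∈ range (m/2+1),
      ∑ j ∈ range (s+1),
        (m.factorial : ℝ)/((2:ℝ)^m * (((s-j).factorial : ℝ)) * (j.factorial : ℝ)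
          * (((m-2*((s-j)+j)).factorial : ℝ))) * ((-1:ℝ)^j * (2*x)^(m-2*((s-j)+j)))
      = if s = 0 then x^m else 0 := by
    intro s hs
    simp only [Finset.mem_range, Nat.lt_succ_iff] at hs
    have hterm : ∀ j ∈ range (s+1),
        (m.factorial : ℝ)/((2:ℝ)^m * (((s-j).factorial : ℝ)) * (j.factorial : ℝ)
          * (((m-2*((s-j)+j)).factorial : ℝ))) * ((-1:ℝ)^j * (2*x)^(m-2*((s-j)+j)))
        = ((m.factorial : ℝ)/((2:ℝ)^m * ((m-2*s).factorial : ℝ)) * (2*x)^(m-2*s)) *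
            ((-1:ℝ)^j / ((j.factorial : ℝ) * (((s-j).factorial : ℝ)))) := by
      intro j hj
      simp only [Finset.mem_range, Nat.lt_succ_iff] at hj
      have h1 : (s-j) + j = s := by omega
      rw [h1]
      have h2 : ((m-2*s).factorial : ℝ) ≠ 0 := by positivity
      have h4 : (((s-j).factorial : ℝ)) ≠ 0 := by positivity
      have h5 : ((j.factorial : ℝ)) ≠ 0 := by positivity
      have h6 : ((2:ℝ)^m) ≠ 0 := by positivity
      field_simp
    rw [Finset.sum_congr rfl hterm, ← Finset.mul_sum, alt_sum]
    by_cases h : s = 0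
    · subst h
      simp only [if_true]
      have hm : ((m.factorial : ℝ)) ≠ 0 := by positivity
      have h6 : ((2:ℝ)^m) ≠ 0 := by positivity
      have : m - 2*0 = m := by omega
      rw [this, mul_one, mul_pow]
      field_simp
    · simp [h]
  rw [Finset.sum_congr rfl step2, Finset.sum_ite_eq' (range (m/2+1)) 0 (fun _ => x^m)]
  simp

/-- Connection formula for Laguerre polynomials in series of Hermite polynomials. -/
theorem laguerre_in_hermite (n : ℕ) (x : ℝ) :
    laguerreP n x =
      ∑ k ∈ Finset.range (n + 1),
        (poch (-(n : ℝ)) k / (2 ^ k * ((k.factorial : ℝ)) ^ 2)) *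
          (∑ j ∈ Finset.range ((n - k) / 2 + 1),
            (poch (((k : ℝ) - n) / 2) j * poch (((k : ℝ) + 1 - n) / 2) j /
              (poch (((k : ℝ) + 1) / 2) j * poch (((k : ℝ) + 2) / 2) j)) *
            (1 / 4 : ℝ) ^ j / (j.factorial : ℝ)) *
          hermiteP k x := by
  set f : ℕ → ℕ → ℝ := fun m i =>
    poch (-(n : ℝ)) m / ((m.factorial : ℝ) * (2:ℝ)^m * (i.factorial : ℝ)
      * (((m-2*i).factorial : ℝ))) * hermiteP (m-2*i) x with hf
  -- key pointwise identity for the coefficients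
  have key : ∀ k i : ℕ,
      (poch (-(n : ℝ)) k / (2 ^ k * ((k.factorial : ℝ)) ^ 2)) *
        ((poch (((k : ℝ) - n) / 2) i * poch (((k : ℝ) + 1 - n) / 2) i /
            (poch (((k : ℝ) + 1) / 2) i * poch (((k : ℝ) + 2) / 2) i)) *
          (1 / 4 : ℝ) ^ i / (i.factorial : ℝ)) * hermiteP k x
      = f (k + 2*i) i := by
    intro k i
    have e1 : poch (-(n : ℝ)) (k + 2*i)
        = poch (-(n : ℝ)) k * (4^i * poch ((((k:ℝ) - n)) / 2) i
            * poch ((((k:ℝ) + 1 - n)) / 2) i) := by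
      rw [poch_add, poch_two_mul]
      have ha : (-(n:ℝ) + k) / 2 = ((k:ℝ) - n) / 2 := by ring
      have hb : (-(n:ℝ) + k + 1) / 2 = ((k:ℝ) + 1 - n) / 2 := by ring
      rw [ha, hb]
    have e2 : (((k + 2*i).factorial : ℝ))
        = (k.factorial : ℝ) * (4^i * poch (((k:ℝ) + 1) / 2) i
            * poch (((k:ℝ) + 2) / 2) i) := by
      rw [factorial_poch, poch_two_mul]
      have hb : ((k:ℝ) + 1 + 1) / 2 = ((k:ℝ) + 2) / 2 := by ring
      rw [hb]
    have e3 : (2:ℝ)^(k + 2*i) = 2^k * 4^i := by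
      rw [pow_add, pow_mul]
      norm_num
    have hk2 : k + 2*i - 2*i = k := by omega
    have q1 : 0 < poch (((k:ℝ) + 1) / 2) i := poch_pos _ (by positivity) i
    have q2 : 0 < poch (((k:ℝ) + 2) / 2) i := poch_pos _ (by positivity) i
    have hkf : ((k.factorial : ℝ)) ≠ 0 := by positivity
    have hif : ((i.factorial : ℝ)) ≠ 0 := by positivity
    have h2k : ((2:ℝ)^k) ≠ 0 := by positivity
    have h4i : ((4:ℝ)^i) ≠ 0 := by positivity
    have hq1 : poch (((k:ℝ) + 1) / 2) i ≠ 0 := q1.ne'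
    have hq2 : poch (((k:ℝ) + 2) / 2) i ≠ 0 := q2.ne'
    rw [hf]
    simp only [hk2]
    rw [e1, e2, e3]
    rw [one_div_pow]
    field_simp
  -- rewrite RHS k-term as a sum over i
  have rhs_eq : ∀ k ∈ range (n+1),
      (poch (-(n : ℝ)) k / (2 ^ k * ((k.factorial : ℝ)) ^ 2)) *
        (∑ j ∈ Finset.range ((n - k) / 2 + 1),
          (poch (((k : ℝ) - n) / 2) j * poch (((k : ℝ) + 1 - n) / 2) j /
            (poch (((k : ℝ) + 1) / 2) j * poch (((k : ℝ) + 2) / 2) j)) *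
          (1 / 4 : ℝ) ^ j / (j.factorial : ℝ)) * hermiteP k x
      = ∑ i ∈ range ((n - k)/2 + 1), f (k + 2*i) i := by
    intro k hk
    rw [Finset.mul_sum, Finset.sum_mul]
    apply Finset.sum_congr rfl
    intro i hi
    exact key k i
  rw [Finset.sum_congr rfl rhs_eq, ← reindexA]
  -- now the LHS
  rw [laguerreP]
  apply Finset.sum_congr rfl
  intro m hm
  rw [hermite_inv m x, Finset.mul_sum, Finset.sum_div]
  apply Finset.sum_congr rfl
  intro i hi
  rw [hf]
  have hmf : ((m.factorial : ℝ)) ≠ 0 := by positivity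
  have hif : ((i.factorial : ℝ)) ≠ 0 := by positivity
  have hmi : (((m-2*i).factorial : ℝ)) ≠ 0 := by positivity
  have h2m : ((2:ℝ)^m) ≠ 0 := by positivity
  simp only []
  field_simp
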